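/- Let X, Y be Banach spaces, A : X × X → Y a continuous symmetric bilinear map with ‖A(x₁,x₂)‖ ≤ a‖x₁‖‖x₂‖, B : X → Y a bounded linear operator such that the closed ball of radius b > 0 in Y is contained in the image under B of the closed unit ball of X, and C ∈ Y with ‖C‖ = c. If b² - 4ac ≥ 0, then the equation A(x,x) + Bx + C = 0 has a solution x ∈ X. -/

import Mathlib

set_option maxHeartbeats 400000

/-- Majorant sequence for the quadratic iteration. -/
noncomputable def quadMajSeq (a b c : ℝ) : ℕ → ℝ
  | 0 => 0
  | n + 1 => (a * (quadMajSeq a b c n) ^ 2 + c) / b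

/-- Quadratic equation in Banach spaces: if `A` is a continuous symmetric bilinear map
bounded by `a`, `B` a bounded linear operator covering the ball of radius `b > 0`,
`C` an element of norm `c`, and `b² - 4ac ≥ 0`, then `A(x,x) + Bx + C = 0` has a solution. -/
theorem quadratic_equation_solvable
    {X Y : Type*} [NormedAddCommGroup X] [NormedSpace ℝ X] [CompleteSpace X]
    [NormedAddCommGroup Y] [NormedSpace ℝ Y] [CompleteSpace Y]
    (A : X →L[ℝ] X →L[ℝ] Y) (a : ℝ) (ha : 0 < a)
    (hAbound : ∀ x₁ x₂ : X, ‖A x₁ x₂‖ ≤ a * ‖x₁‖ * ‖x₂‖)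
    (hAsymm : ∀ x₁ x₂ : X, A x₁ x₂ = A x₂ x₁)
    (B : X →L[ℝ] Y) (b : ℝ) (hb : 0 < b)
    (hBcover : Metric.closedBall (0 : Y) b ⊆ B '' Metric.closedBall (0 : X) 1)
    (C : Y) (c : ℝ) (hc : ‖C‖ = c)
    (hD : b ^ 2 - 4 * a * c ≥ 0) :
    ∃ x : X, A x x + B x + C = 0 := by
  have hc0 : 0 ≤ c := hc ▸ norm_nonneg C
  set s : ℕ → ℝ := quadMajSeq a b c with hs_def
  have hs0 : s 0 = 0 := rfl
  have hsucc : ∀ n, s (n + 1) = (a * (s n) ^ 2 + c) / b := fun n => rfl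
  -- the smaller root of a t² - b t + c = 0
  set D := b ^ 2 - 4 * a * c with hD_def
  have hsq : Real.sqrt D ^ 2 = D := Real.sq_sqrt hD
  have hsqrtb : Real.sqrt D ≤ b := by
    nlinarith [Real.sqrt_nonneg D, hsq, hb, hc0, ha]
  set r : ℝ := (b - Real.sqrt D) / (2 * a) with hr_def
  have hr0 : 0 ≤ r := by
    apply div_nonneg (by linarith) (by linarith)
  have hfix : a * r ^ 2 + c = b * r := by
    rw [hr_def]
    field_simp
    nlinarith [hsq]
  -- basic properties of s
  have hspos : ∀ n, 0 ≤ s n ∧ s n ≤ r := by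
    intro n
    induction n with
    | zero => exact ⟨le_refl _, hr0⟩
    | succ n ih =>
      obtain ⟨h0, h1⟩ := ih
      constructor
      · rw [hsucc]; positivity
      · rw [hsucc, div_le_iff₀ hb]
        nlinarith [hfix, mul_nonneg (mul_nonneg ha.le (sub_nonneg.mpr h1)) (by linarith : (0:ℝ) ≤ r + s n)]
  have hmono : ∀ n, s n ≤ s (n + 1) := by
    intro n
    induction n with
    | zero =>
      rw [hs0, hsucc, hs0]
      positivity
    | succ n ih =>
      rw [hsucc, hsucc]
      gcongr
      nlinarith [(hspos n).1]
  -- covering lemma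
  have cover : ∀ (y : Y) (t : ℝ), 0 ≤ t → ‖y‖ ≤ b * t → ∃ z : X, B z = y ∧ ‖z‖ ≤ t := by
    intro y t ht hy
    rcases eq_or_lt_of_le ht with h | h
    · refine ⟨0, ?_, by simp [← h]⟩
      have : y = 0 := by
        have : ‖y‖ ≤ 0 := by rw [← h] at hy; simpa using hy
        simpa using le_antisymm this (norm_nonneg y)
      simp [this]
    · have hy' : t⁻¹ • y ∈ Metric.closedBall (0 : Y) b := by
        rw [Metric.mem_closedBall, dist_zero_right, norm_smul, norm_inv,
          Real.norm_of_nonneg ht]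
        rw [inv_mul_le_iff₀ h]
        linarith [hy]
      obtain ⟨z', hz', hBz'⟩ := hBcover hy'
      rw [Metric.mem_closedBall, dist_zero_right] at hz'
      refine ⟨t • z', ?_, ?_⟩
      · rw [map_smul, hBz', smul_inv_smul₀ (ne_of_gt h)]
      · rw [norm_smul, Real.norm_of_nonneg ht]
        nlinarith
  -- predicate for pairs of consecutive iterates
  set P : ℕ → X × X → Prop := fun n p =>
    ‖p.1‖ ≤ s n ∧ ‖p.2‖ ≤ s (n + 1) ∧ ‖p.2 - p.1‖ ≤ s (n + 1) - s n ∧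
      B p.2 = -(A p.1 p.1 + C) with hP_def
  -- base
  have hs1 : b * s 1 = c := by
    rw [hsucc, hs0]
    field_simp
    ring
  obtain ⟨x1, hBx1, hx1⟩ : ∃ z : X, B z = -C ∧ ‖z‖ ≤ s 1 := by
    apply cover (-C) (s 1) (by rw [← hs0]; exact hmono 0)
    rw [norm_neg, hc, hs1]
  have hbase : P 0 (0, x1) := by
    refine ⟨by simp [hs0], hx1, by simpa [hs0] using hx1, ?_⟩
    simp [hBx1]
  -- step
  have hstep : ∀ n (p : X × X), P n p → ∃ q : X × X, P (n + 1) q ∧ q.1 = p.2 := by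
    rintro n ⟨x₀, x₁⟩ ⟨h0, h1, hd, hB⟩
    simp only at h0 h1 hd hB
    have ht : 0 ≤ s (n + 2) - s (n + 1) := by linarith [hmono (n + 1)]
    have halg : b * (s (n + 2) - s (n + 1)) = a * (s (n + 1) + s n) * (s (n + 1) - s n) := by
      rw [hsucc (n + 1), hsucc n]
      field_simp
      ring
    have hbound : ‖-(A (x₁ + x₀) (x₁ - x₀))‖ ≤ b * (s (n + 2) - s (n + 1)) := by
      rw [norm_neg, halg]
      calc ‖A (x₁ + x₀) (x₁ - x₀)‖ ≤ a * ‖x₁ + x₀‖ * ‖x₁ - x₀‖ := hAbound _ _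
        _ ≤ a * (s (n + 1) + s n) * (s (n + 1) - s n) := by
            have e1 : ‖x₁ + x₀‖ ≤ s (n + 1) + s n := (norm_add_le x₁ x₀).trans (by linarith)
            have e2 : a * ‖x₁ + x₀‖ ≤ a * (s (n + 1) + s n) :=
              mul_le_mul_of_nonneg_left e1 ha.le
            have e3 : 0 ≤ a * ‖x₁ + x₀‖ := mul_nonneg ha.le (norm_nonneg _)
            exact mul_le_mul e2 hd (norm_nonneg _) (by linarith)
    obtain ⟨z, hBz, hz⟩ := cover _ _ ht hbound
    have expand : A (x₁ + x₀) (x₁ - x₀) = A x₁ x₁ - A x₀ x₀ := by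
      simp only [map_add, map_sub, ContinuousLinearMap.add_apply,
        ContinuousLinearMap.sub_apply]
      rw [hAsymm x₀ x₁]
      abel
    refine ⟨(x₁, x₁ + z), ⟨h1, ?_, ?_, ?_⟩, rfl⟩
    · calc ‖x₁ + z‖ ≤ ‖x₁‖ + ‖z‖ := norm_add_le _ _
        _ ≤ s (n + 2) := by linarith
    · simpa [add_sub_cancel_left] using hz
    · simp only
      rw [map_add, hB, hBz, expand]
      abel
  choose F hF hF' using hstep
  -- the recursive sequence of pairs
  let g : ∀ n : ℕ, { p : X × X // P n p } := fun n =>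
    Nat.rec ⟨(0, x1), hbase⟩ (fun n q => ⟨F n q.1 q.2, hF n q.1 q.2⟩) n
  have hg_succ : ∀ n, (g (n + 1)).1 = F n (g n).1 (g n).2 := fun n => rfl
  obtain ⟨x, hxnorm, hdiff, hBeq⟩ : ∃ x : ℕ → X, (∀ n, ‖x n‖ ≤ s n) ∧
      (∀ n, ‖x (n + 1) - x n‖ ≤ s (n + 1) - s n) ∧
      (∀ n, B (x (n + 1)) = -(A (x n) (x n) + C)) := by
    have hx_succ : ∀ n, (g (n + 1)).1.1 = (g n).1.2 := fun n => by rw [hg_succ, hF']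
    refine ⟨fun n => (g n).1.1, fun n => (g n).2.1, fun n => ?_, fun n => ?_⟩
    · show ‖(g (n + 1)).1.1 - (g n).1.1‖ ≤ s (n + 1) - s n
      rw [hx_succ n]
      exact (g n).2.2.2.1
    · show B ((g (n + 1)).1.1) = -(A ((g n).1.1) ((g n).1.1) + C)
      rw [hx_succ n]
      exact (g n).2.2.2.2
  clear hg_succ g hbase hF hF' F hBx1 hx1 x1 hP_def P cover hBcover
  -- s is Cauchy
  have hmono' : Monotone s := monotone_nat_of_le_succ hmono
  have hs_tend : ∃ L, Filter.Tendsto s Filter.atTop (nhds L) := by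
    refine ⟨⨆ n, s n, tendsto_atTop_ciSup hmono' ⟨r, ?_⟩⟩
    rintro y ⟨n, rfl⟩
    exact (hspos n).2
  obtain ⟨Ls, hLs⟩ := hs_tend
  have hs_cauchy : CauchySeq s := hLs.cauchySeq
  -- telescoping
  have tel : ∀ n k, ‖x (n + k) - x n‖ ≤ s (n + k) - s n := by
    intro n k
    induction k with
    | zero => simp
    | succ k ih =>
      calc ‖x (n + (k + 1)) - x n‖ ≤ ‖x (n + k + 1) - x (n + k)‖ + ‖x (n + k) - x n‖ := by
            rw [show n + (k + 1) = n + k + 1 from rfl]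
            exact norm_sub_le_norm_sub_add_norm_sub _ _ _
        _ ≤ (s (n + k + 1) - s (n + k)) + (s (n + k) - s n) := add_le_add (hdiff _) ih
        _ = s (n + (k + 1)) - s n := by ring_nf
  have hdle : ∀ m n, n ≤ m → dist (x m) (x n) ≤ dist (s m) (s n) := by
    intro m n hnm
    obtain ⟨k, rfl⟩ := Nat.exists_eq_add_of_le hnm
    rw [dist_eq_norm, dist_eq_norm, Real.norm_eq_abs]
    exact (tel n k).trans (le_abs_self _)
  have hx_cauchy : CauchySeq x := by
    rw [Metric.cauchySeq_iff]
    intro ε hε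
    obtain ⟨N, hN⟩ := Metric.cauchySeq_iff.mp hs_cauchy ε hε
    refine ⟨N, fun m hm n hn => ?_⟩
    rcases le_total n m with h | h
    · exact lt_of_le_of_lt (hdle m n h) (hN m hm n hn)
    · rw [dist_comm]
      exact lt_of_le_of_lt (hdle n m h) (hN n hn m hm)
  obtain ⟨L, hL⟩ := cauchySeq_tendsto_of_complete hx_cauchy
  refine ⟨L, ?_⟩
  have h1 : Filter.Tendsto (fun n => B (x (n + 1))) Filter.atTop (nhds (B L)) :=
    ((B.continuous.tendsto L).comp (hL.comp (Filter.tendsto_add_atTop_nat 1)))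
  have hAA : Filter.Tendsto (fun n => A (x n) (x n)) Filter.atTop (nhds (A L L)) := by
    have hcont : Continuous fun p : X × X => A p.1 p.2 := A.continuous₂
    exact (hcont.tendsto (L, L)).comp (hL.prodMk_nhds hL)
  have h2 : Filter.Tendsto (fun n => B (x (n + 1))) Filter.atTop (nhds (-(A L L + C))) := by
    have : (fun n => B (x (n + 1))) = fun n => -(A (x n) (x n) + C) := funext hBeq
    rw [this]
    exact ((hAA.add_const C).neg)
  have := tendsto_nhds_unique h1 h2
  rw [this]
  abel
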